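/- Let k be a field of characteristic p > 0 and S = k[X_1,…,X_n,Y_1,…,Y_n] with n ≥ 1. Then the element (Y_1 · [1,2] · [2,3] ⋯ [n−1,n] · X_n)^{p−1} does not belong to the ideal (X_1^p,…,X_n^p, Y_1^p,…,Y_n^p) of S. -/

import Mathlib

open MvPolynomial Finset

variable (K : Type*) [Field K]

/-- The variable `X_i` of `S = k[X_1, …, X_n, Y_1, …, Y_n]`. -/
noncomputable def Xv {n : ℕ} (i : Fin n) : MvPolynomial (Fin n ⊕ Fin n) K :=
  MvPolynomial.X (Sum.inl i)

/-- The variable `Y_i` of `S = k[X_1, …, X_n, Y_1, …, Y_n]`. -/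
noncomputable def Yv {n : ℕ} (i : Fin n) : MvPolynomial (Fin n ⊕ Fin n) K :=
  MvPolynomial.X (Sum.inr i)

/-- The binomial `[i, j] = X_i Y_j - X_j Y_i`. -/
noncomputable def brkt {n : ℕ} (i j : Fin n) : MvPolynomial (Fin n ⊕ Fin n) K :=
  Xv K i * Yv K j - Xv K j * Yv K i

/-- The binomial edge ideal `J_G = ([i, j] : {i, j} ∈ E(G))`. -/
noncomputable def binomialEdgeIdeal {n : ℕ} (G : SimpleGraph (Fin n)) :
    Ideal (MvPolynomial (Fin n ⊕ Fin n) K) :=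
  Ideal.span {f | ∃ i j : Fin n, G.Adj i j ∧ f = brkt K i j}

/-- The `p`-th Frobenius power `I^{[p]}` of an ideal `I`, generated by `{f^p : f ∈ I}`. -/
def frobeniusPower {R : Type*} [CommRing R] (p : ℕ) (I : Ideal R) : Ideal R :=
  Ideal.span ((fun f => f ^ p) '' (I : Set R))

/-- `F(v) = (Y_{v_1} [v_1,v_2] [v_2,v_3] ⋯ [v_{n-1},v_n] X_{v_n})^{p-1}`. -/
noncomputable def Fpoly {n : ℕ} (p : ℕ) (v : Fin n → Fin n) (hn : 0 < n) :
    MvPolynomial (Fin n ⊕ Fin n) K :=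
  (Yv K (v ⟨0, hn⟩) *
      (∏ t : Fin (n - 1),
        brkt K (v ⟨t, by have := t.isLt; omega⟩) (v ⟨(t : ℕ) + 1, by have := t.isLt; omega⟩)) *
      Xv K (v ⟨n - 1, by omega⟩)) ^ (p - 1)

section Aux

variable {K : Type*} [Field K] {n : ℕ}

/-- exponent vector of `X_a Y_b`. -/
noncomputable def uvec (a b : Fin n) : (Fin n ⊕ Fin n) →₀ ℕ :=
  Finsupp.single (Sum.inl a) 1 + Finsupp.single (Sum.inr b) 1

lemma brkt_eq (K : Type*) [Field K] (a b : Fin n) :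
    brkt K a b = monomial (uvec a b) (1 : K) - monomial (uvec b a) 1 := by
  have hX : ∀ s : Fin n ⊕ Fin n, (X s : MvPolynomial (Fin n ⊕ Fin n) K)
      = monomial (Finsupp.single s 1) 1 := by
    intro s; rw [← X_pow_eq_monomial, pow_one]
  simp only [brkt, Xv, Yv, hX, monomial_mul, one_mul, uvec]

lemma coeff_mul_brkt_pow (a b : Fin n) (q : ℕ) (P : MvPolynomial (Fin n ⊕ Fin n) K)
    (ν : (Fin n ⊕ Fin n) →₀ ℕ) :
    coeff ν (P * (brkt K a b) ^ q) =
      ∑ j ∈ range (q + 1),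
        (if (j • uvec a b + (q - j) • uvec b a) ≤ ν then
          coeff (ν - (j • uvec a b + (q - j) • uvec b a)) P * ((-1) ^ (j + q) * (q.choose j : K))
        else 0) := by
  rw [brkt_eq, sub_pow, mul_sum, coeff_sum]
  refine Finset.sum_congr rfl fun j hj => ?_
  have : ((-1 : MvPolynomial (Fin n ⊕ Fin n) K)) ^ (j + q) * (monomial (uvec a b) (1:K)) ^ j *
      (monomial (uvec b a) (1:K)) ^ (q - j) * (q.choose j : MvPolynomial (Fin n ⊕ Fin n) K) =
      monomial (j • uvec a b + (q - j) • uvec b a) ((-1) ^ (j + q) * (q.choose j : K)) := by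
    have h1 : ((-1 : MvPolynomial (Fin n ⊕ Fin n) K)) ^ (j + q) = C ((-1 : K) ^ (j + q)) := by
      rw [map_pow, map_neg, map_one]
    have h2 : ((q.choose j : ℕ) : MvPolynomial (Fin n ⊕ Fin n) K) = C ((q.choose j : ℕ) : K) := by
      rw [C_eq_coe_nat]
    rw [h1, h2, monomial_pow, monomial_pow, one_pow, one_pow,
      mul_assoc (C ((-1:K)^(j+q))), monomial_mul, one_mul, C_mul_monomial,
      mul_comm _ (C ((q.choose j : ℕ) : K)), C_mul_monomial]
    congr 1
    ring
  rw [this, coeff_mul_monomial']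


/-- `t` as an element of `Fin n` (via `mod`). -/
def fm (n : ℕ) (hn : 0 < n) (t : ℕ) : Fin n := ⟨t % n, Nat.mod_lt _ hn⟩

lemma fm_val {hn : 0 < n} {t : ℕ} (ht : t < n) : (fm n hn t).val = t := Nat.mod_eq_of_lt ht

/-- The exponent vector with `q` at `X_0, …, X_{m-1}` and `Y_1, …, Y_m`. -/
noncomputable def nuv (q : ℕ) (hn : 0 < n) (m : ℕ) : (Fin n ⊕ Fin n) →₀ ℕ :=
  ∑ t ∈ range m, (Finsupp.single (Sum.inl (fm n hn t)) q +
    Finsupp.single (Sum.inr (fm n hn (t + 1))) q)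

lemma nuv_inl {q : ℕ} {hn : 0 < n} {m : ℕ} (hm : m ≤ n - 1) (i : Fin n) :
    nuv q hn m (Sum.inl i) = if i.val < m then q else 0 := by
  classical
  rw [nuv, Finsupp.finset_sum_apply]
  have h : ∀ t ∈ range m,
      ((Finsupp.single (Sum.inl (fm n hn t)) q +
        Finsupp.single (Sum.inr (fm n hn (t + 1))) q : (Fin n ⊕ Fin n) →₀ ℕ)) (Sum.inl i)
        = if t = i.val then q else 0 := by
    intro t ht
    rw [mem_range] at ht
    have htn : t < n := by omega
    rw [Finsupp.add_apply, Finsupp.single_apply, Finsupp.single_apply]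
    have : (Sum.inl (fm n hn t) = (Sum.inl i : Fin n ⊕ Fin n)) ↔ t = i.val := by
      constructor
      · intro h; rw [← fm_val (hn := hn) htn]; exact congrArg Fin.val (Sum.inl.inj h)
      · intro h; congr 1; exact Fin.ext ((fm_val htn).trans h)
    simp [this]
  rw [Finset.sum_congr rfl h, Finset.sum_ite_eq' (range m) i.val fun _ => q]
  simp [mem_range]

lemma nuv_inr {q : ℕ} {hn : 0 < n} {m : ℕ} (hm : m ≤ n - 1) (i : Fin n) :
    nuv q hn m (Sum.inr i) = if 0 < i.val ∧ i.val ≤ m then q else 0 := by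
  classical
  rw [nuv, Finsupp.finset_sum_apply]
  have h : ∀ t ∈ range m,
      ((Finsupp.single (Sum.inl (fm n hn t)) q +
        Finsupp.single (Sum.inr (fm n hn (t + 1))) q : (Fin n ⊕ Fin n) →₀ ℕ)) (Sum.inr i)
        = if t + 1 = i.val then q else 0 := by
    intro t ht
    rw [mem_range] at ht
    have htn : t + 1 < n := by omega
    rw [Finsupp.add_apply, Finsupp.single_apply, Finsupp.single_apply]
    have : (Sum.inr (fm n hn (t + 1)) = (Sum.inr i : Fin n ⊕ Fin n)) ↔ t + 1 = i.val := by
      constructor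
      · intro h; rw [← fm_val (hn := hn) htn]; exact congrArg Fin.val (Sum.inr.inj h)
      · intro h; congr 1; exact Fin.ext ((fm_val htn).trans h)
    simp [this]
  rw [Finset.sum_congr rfl h]
  rcases Nat.eq_zero_or_pos i.val with h0 | h0
  · rw [if_neg (by omega)]
    refine Finset.sum_eq_zero fun t _ => if_neg (by omega)
  · obtain ⟨j, hj⟩ : ∃ j, i.val = j + 1 := ⟨i.val - 1, by omega⟩
    have : ∀ t ∈ range m, (if t + 1 = i.val then q else 0) = if t = j then q else 0 := by
      intro t _; simp only [hj, Nat.add_right_cancel_iff]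
    rw [Finset.sum_congr rfl this, Finset.sum_ite_eq' (range m) j fun _ => q]
    rcases lt_or_ge j m with hc | hc
    · rw [if_pos (mem_range.mpr hc), if_pos (by omega)]
    · rw [if_neg (by simp only [mem_range]; omega), if_neg (by omega)]

lemma coeff_nuv_prod (K : Type*) [Field K] (q : ℕ) (hn : 0 < n) :
    ∀ m, m ≤ n - 1 →
      coeff (nuv q hn m)
        (∏ t ∈ range m, (brkt K (fm n hn t) (fm n hn (t + 1))) ^ q) = 1 := by
  intro m
  induction m with
  | zero => intro _; simp [nuv, coeff_zero, MvPolynomial.coeff_one]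
  | succ m ih =>
    intro hm
    have hm' : m ≤ n - 1 := by omega
    rw [prod_range_succ, coeff_mul_brkt_pow]
    set a := fm n hn m with ha
    set b := fm n hn (m + 1) with hb
    have haval : a.val = m := fm_val (by omega)
    have hbval : b.val = m + 1 := fm_val (by omega)
    have heq : (q : ℕ) • uvec a b = Finsupp.single (Sum.inl a) q + Finsupp.single (Sum.inr b) q := by
      simp [uvec, smul_add, Finsupp.smul_single]
    have hsucc : nuv q hn (m + 1) = nuv q hn m + (q : ℕ) • uvec a b := by
      rw [heq, nuv, sum_range_succ, ← nuv]
    rw [Finset.sum_eq_single q]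
    · rw [Nat.sub_self, zero_smul, add_zero, hsucc, if_pos le_add_self, add_tsub_cancel_right,
        ih hm', Nat.choose_self, Nat.cast_one, mul_one, one_mul, Even.neg_one_pow ⟨q, rfl⟩]
    · intro j hj hjq
      rw [mem_range] at hj
      rw [if_neg]
      intro hle
      have := hle (Sum.inl b)
      have hab : a ≠ b := by
        intro h; rw [h, hbval] at haval; omega
      have hb1 : uvec a b (Sum.inl b) = 0 := by
        simp [uvec, Finsupp.single_apply, hab]
      have hb2 : uvec b a (Sum.inl b) = 1 := by
        simp [uvec, Finsupp.single_apply]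
      have hν : nuv q hn (m + 1) (Sum.inl b) = 0 := by
        rw [nuv_inl hm, hbval, if_neg (by omega)]
      rw [Finsupp.add_apply, Finsupp.smul_apply, Finsupp.smul_apply, hb1, hb2, hν] at this
      simp only [smul_eq_mul, mul_zero, mul_one, zero_add] at this
      omega
    · intro h
      exact absurd (mem_range.mpr (by omega)) h

end Aux

/-- `(Y_1 [1,2] [2,3] ⋯ [n-1,n] X_n)^{p-1}` does not lie in the ideal
`(X_1^p, …, X_n^p, Y_1^p, …, Y_n^p)`. -/
theorem Fpoly_not_mem_frobenius_max {n : ℕ} (hn : 0 < n)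
    (p : ℕ) (hp : p.Prime) [CharP K p] :
    Fpoly K p id hn ∉
      Ideal.span (Set.range fun s : Fin n ⊕ Fin n =>
        (MvPolynomial.X s : MvPolynomial (Fin n ⊕ Fin n) K) ^ p) := by
  classical
  intro hmem
  set q := p - 1 with hq
  set s₀ : (Fin n ⊕ Fin n) →₀ ℕ :=
    Finsupp.single (Sum.inr (fm n hn 0)) q + Finsupp.single (Sum.inl (fm n hn (n - 1))) q with hs₀
  set μ := s₀ + nuv q hn (n - 1) with hμ
  -- rewrite the Fin product as a range product
  have hXP : (∏ t : Fin (n - 1),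
        brkt K (id (⟨t, by have := t.isLt; omega⟩ : Fin n))
          (id (⟨(t : ℕ) + 1, by have := t.isLt; omega⟩ : Fin n)))
      = ∏ t ∈ range (n - 1), brkt K (fm n hn t) (fm n hn (t + 1)) := by
    rw [← Fin.prod_univ_eq_prod_range (fun t => brkt K (fm n hn t) (fm n hn (t + 1))) (n - 1)]
    refine Finset.prod_congr rfl fun t _ => ?_
    have h1 : (t : ℕ) < n - 1 := t.isLt
    congr 1
    · exact Fin.ext (fm_val (by omega)).symm
    · exact Fin.ext (fm_val (by omega)).symm
  have hFeq : Fpoly K p id hn =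
      monomial s₀ (1 : K) * ∏ t ∈ range (n - 1), (brkt K (fm n hn t) (fm n hn (t + 1))) ^ q := by
    rw [Fpoly, hXP]
    have h0 : (⟨0, hn⟩ : Fin n) = fm n hn 0 := Fin.ext (fm_val hn).symm
    have h1 : (⟨n - 1, by omega⟩ : Fin n) = fm n hn (n - 1) := Fin.ext (fm_val (by omega)).symm
    rw [id_eq, id_eq, h0, h1, mul_pow, mul_pow, ← Finset.prod_pow]
    rw [Yv, Xv, X_pow_eq_monomial, X_pow_eq_monomial]
    ring_nf
    rw [show ∀ (A B C : MvPolynomial (Fin n ⊕ Fin n) K), A * B * C = (A * C) * B from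
      fun A B C => by ring]
    rw [monomial_mul, one_mul]
  have hcF : coeff μ (Fpoly K p id hn) = 1 := by
    rw [hFeq, hμ, coeff_monomial_mul', if_pos le_self_add, add_tsub_cancel_left, one_mul]
    exact coeff_nuv_prod K q hn (n - 1) le_rfl
  have hμle : ∀ s, μ s ≤ q := by
    intro s
    rw [hμ, Finsupp.add_apply]
    cases s with
    | inl i =>
      have hval : (fm n hn (n - 1)).val = n - 1 := fm_val (by omega)
      have h1 : s₀ (Sum.inl i) = if fm n hn (n - 1) = i then q else 0 := by
        simp [hs₀, Finsupp.single_apply]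
      rw [h1, nuv_inl le_rfl i]
      have : fm n hn (n - 1) = i ↔ n - 1 = i.val := by
        constructor
        · intro h; rw [← h, hval]
        · intro h; exact Fin.ext (hval.trans h)
      rw [if_congr this rfl rfl]
      split_ifs <;> omega
    | inr i =>
      have hval : (fm n hn 0).val = 0 := fm_val hn
      have h1 : s₀ (Sum.inr i) = if fm n hn 0 = i then q else 0 := by
        simp [hs₀, Finsupp.single_apply]
      rw [h1, nuv_inr le_rfl i]
      have hi := i.isLt
      have : fm n hn 0 = i ↔ 0 = i.val := by
        constructor
        · intro h; rw [← h, hval]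
        · intro h; exact Fin.ext (hval.trans h)
      rw [if_congr this rfl rfl]
      split_ifs <;> omega
  rw [Ideal.mem_span_range_iff_exists_fun] at hmem
  obtain ⟨c, hc⟩ := hmem
  have h0 : coeff μ (∑ s : Fin n ⊕ Fin n, c s * MvPolynomial.X s ^ p) = 1 := by rw [hc]; exact hcF
  rw [coeff_sum] at h0
  rw [Finset.sum_eq_zero (fun s _ => ?_)] at h0
  · exact one_ne_zero h0.symm
  · rw [X_pow_eq_monomial, coeff_mul_monomial', if_neg]
    rw [Finsupp.single_le_iff]
    have := hμle s
    have := hp.pos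
    omega
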